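/- For any countable discrete group Q, the semidirect product F_{|Q|} ⋊_β Q, where Q acts on the free group with generators {g_t : t ∈ Q} by β_s(g_t) = g_{st}, is an I.C.C. group: every non-identity element has infinitely many conjugates. -/

import Mathlib

open FreeGroup

private lemma reduce_map_aux {α β : Type*} [DecidableEq α] [DecidableEq β]
    {f : α → β} (hf : Function.Injective f) (L : List (α × Bool)) :
    reduce (L.map fun p => (f p.1, p.2)) = (reduce L).map fun p => (f p.1, p.2) := by
  induction L with
  | nil => rfl
  | cons x L ih =>
    rw [List.map_cons, reduce.cons, reduce.cons, ih]
    cases h : reduce L with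
    | nil => rfl
    | cons hd tl =>
      simp only [List.map_cons]
      by_cases hx : x.1 = hd.1 ∧ x.2 = !hd.2
      · simp [hx.1, hx.2]
      · have : ¬(f x.1 = f hd.1 ∧ x.2 = !hd.2) := by
          intro ⟨h1, h2⟩; exact hx ⟨hf h1, h2⟩
        simp only [if_neg hx, if_neg this, List.map_cons]

private lemma toWord_map_inj {α β : Type*} [DecidableEq α] [DecidableEq β]
    {f : α → β} (hf : Function.Injective f) (w : FreeGroup α) :
    (FreeGroup.map f w).toWord = w.toWord.map fun p => (f p.1, p.2) := by
  rcases w with ⟨L⟩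
  rw [show (Quot.mk Red.Step L : FreeGroup α) = mk L from rfl, map.mk, toWord_mk, toWord_mk,
    reduce_map_aux hf]

/-- For any countably infinite discrete group `Q`, the semidirect product
`F_{|Q|} ⋊ Q`, where `Q` acts on the free group with generators `{g_t : t ∈ Q}` by
`β_s(g_t) = g_{st}`, is an I.C.C. group: every non-identity element has infinitely many
conjugates. -/
theorem semidirect_product_with_free_group_is_ICC
    {Q : Type*} [Group Q] [Countable Q] [Infinite Q]
    (β : Q →* MulAut (FreeGroup Q))
    (hβ : ∀ s t : Q, β s (FreeGroup.of t) = FreeGroup.of (s * t)) :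
    ∀ g : FreeGroup Q ⋊[β] Q, g ≠ 1 →
      {x : FreeGroup Q ⋊[β] Q | ∃ k, x = k * g * k⁻¹}.Infinite := by
  classical
  intro g hg
  by_cases hs : g.right = 1
  · -- pure free-group part: g = ⟨w, 1⟩ with w ≠ 1
    have hw : g.left ≠ 1 := by
      intro h
      apply hg
      ext
      · exact h
      · exact hs
    -- β t acts as FreeGroup.map (t * ·)
    have hβmap : ∀ t : Q, ∀ v : FreeGroup Q,
        β t v = FreeGroup.map (fun x => t * x) v := by
      intro t v
      have := FreeGroup.ext_hom ((β t) : FreeGroup Q →* FreeGroup Q)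
        (FreeGroup.map (fun x => t * x)) (by
          intro a
          simp [hβ, FreeGroup.map.of])
      exact DFunLike.congr_fun this v
    set f : Q → FreeGroup Q ⋊[β] Q :=
      fun t => SemidirectProduct.inr t * g * (SemidirectProduct.inr t)⁻¹ with hf
    apply Set.infinite_of_injective_forall_mem (f := f)
    next =>
      intro t t' htt'
      have hleft : (f t).left = (f t').left := by rw [htt']
      simp only [hf, SemidirectProduct.mul_left, SemidirectProduct.left_inr,
        SemidirectProduct.right_inr, SemidirectProduct.inv_left, SemidirectProduct.inv_right,
        SemidirectProduct.left_inr, one_mul, SemidirectProduct.mul_right] at hleft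
      -- hleft should reduce to β t g.left = β t' g.left modulo junk
      have h2 : β t g.left = β t' g.left := by
        have e1 : (SemidirectProduct.inr (φ := β) t * g * (SemidirectProduct.inr t)⁻¹).left
            = β t g.left := by
          simp [hs]
        have e2 : (SemidirectProduct.inr (φ := β) t' * g * (SemidirectProduct.inr t')⁻¹).left
            = β t' g.left := by
          simp [hs]
        have : (f t).left = (f t').left := by rw [htt']
        rw [hf] at this
        simpa [e1, e2] using this
      rw [hβmap, hβmap] at h2
      have hwords := congrArg FreeGroup.toWord h2
      rw [toWord_map_inj (mul_right_injective t),
        toWord_map_inj (mul_right_injective t')] at hwords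
      obtain ⟨p, L, hL⟩ : ∃ p L, g.left.toWord = p :: L := by
        cases hL : g.left.toWord with
        | nil => exact absurd (FreeGroup.toWord_eq_nil_iff.mp hL) hw
        | cons p L => exact ⟨p, L, rfl⟩
      rw [hL] at hwords
      simp only [List.map_cons, List.cons.injEq, Prod.mk.injEq] at hwords
      exact mul_right_cancel hwords.1.1
    · intro t
      exact ⟨SemidirectProduct.inr t, rfl⟩
  · -- g.right = s ≠ 1: conjugate by inl (of q)
    set s := g.right with hsdef
    set w := g.left with hwdef
    -- exponent-sum homomorphism at a generator a
    set σ : Q → (FreeGroup Q →* Multiplicative ℤ) :=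
      fun a => FreeGroup.lift (fun x => Multiplicative.ofAdd (if x = a then (1:ℤ) else 0))
      with hσ
    set f : Q → FreeGroup Q ⋊[β] Q :=
      fun q => SemidirectProduct.inl (FreeGroup.of q) * g *
        (SemidirectProduct.inl (FreeGroup.of q))⁻¹ with hf
    apply Set.infinite_of_injective_forall_mem (f := f)
    next =>
      intro q q' hqq'
      by_contra hne
      have hleft : (f q).left = (f q').left := by rw [hqq']
      have e : ∀ r : Q, (SemidirectProduct.inl (φ := β) (FreeGroup.of r) * g *
          (SemidirectProduct.inl (FreeGroup.of r))⁻¹).left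
          = FreeGroup.of r * w * (FreeGroup.of (s * r))⁻¹ := by
        intro r
        simp only [SemidirectProduct.mul_left, SemidirectProduct.mul_right,
          SemidirectProduct.left_inl, SemidirectProduct.right_inl, SemidirectProduct.inv_left,
          SemidirectProduct.inv_right, mul_one, one_mul, inv_one, _root_.map_one,
          MulAut.one_apply]
        rw [show (β g.right) (of r)⁻¹ = (of (g.right * r))⁻¹ from by
          rw [_root_.map_inv, hβ]]
      rw [hf] at hleft
      simp only [e] at hleft
      -- apply σ q
      have hσval := congrArg (fun v => Multiplicative.toAdd (σ q v)) hleft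
      simp only [hσ, _root_.map_mul, _root_.map_inv, FreeGroup.lift_apply_of, toAdd_mul, toAdd_inv,
        toAdd_ofAdd] at hσval
      have hsq : s * q ≠ q := by
        intro h
        exact hs (by rwa [mul_eq_right] at h)
      have hq'q : q' ≠ q := fun h => hne h.symm
      rw [if_pos trivial, if_neg hsq, if_neg hq'q] at hσval
      by_cases h2 : s * q' = q
      · rw [if_pos h2] at hσval; omega
      · rw [if_neg h2] at hσval; omega
    · intro q
      exact ⟨SemidirectProduct.inl (FreeGroup.of q), rfl⟩
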